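/- The bijection ξ from Dyck path prefixes of length n to Grand Dyck paths of length n (obtained by changing the first ⌈j/2⌉ unmatched N steps into E steps) preserves the peak set: Peak(P) = Peak(ξ(P)) for every Dyck path prefix P of length n. -/

import Mathlib

open Finset

-- A lattice path with unit north and east steps is encoded as a list of booleans:
-- `true` is an N = (0,1) step and `false` is an E = (1,0) step.

/-- The height (#N − #E) of the path after its first t steps. -/
def ht (w : List Bool) (t : ℕ) : ℤ :=
  ((w.take t).count true : ℤ) - ((w.take t).count false : ℤ)

/-- A Dyck path prefix: a path that never goes below the diagonal y = x. -/
def IsPrefixPath (w : List Bool) : Prop := ∀ t, 0 ≤ ht w t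

/-- The peak set of a path: labels (1,…,length−1) of vertices that lie in the middle
of an NE factor. -/
def peakSet (w : List Bool) : Finset ℕ :=
  (Finset.Ico 1 w.length).filter
    (fun i => w.getD (i - 1) false = true ∧ w.getD i true = false)

/-- The N step at position i and the E step at position j face each other (are
matched): the slope-1 segment joining their midpoints stays weakly below the path,
i.e. the height just after step i is attained again just after step j and is never
undercut in between. -/
def Matched (w : List Bool) (i j : ℕ) : Prop :=
  i < j ∧ j < w.length ∧ w.getD i false = true ∧ w.getD j true = false ∧
    ht w j = ht w (i + 1) ∧ ∀ t ∈ Finset.Icc (i + 1) j, ht w (i + 1) ≤ ht w t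

instance (w : List Bool) (i j : ℕ) : Decidable (Matched w i j) := by
  unfold Matched; infer_instance

/-- Position i carries an unmatched N step. -/
def UnmatchedN (w : List Bool) (i : ℕ) : Prop :=
  i < w.length ∧ w.getD i false = true ∧ ∀ j < w.length, ¬ Matched w i j

instance (w : List Bool) (i : ℕ) : Decidable (UnmatchedN w i) := by
  unfold UnmatchedN; infer_instance

/-- The map ξ: change the first ⌈j/2⌉ unmatched N steps into E steps, where j is the
number of unmatched N steps. -/
def xi (w : List Bool) : List Bool :=
  let U := (Finset.range w.length).filter (fun i => UnmatchedN w i)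
  let F := (U.sort (· ≤ ·)).take ((U.card + 1) / 2)
  w.mapIdx (fun i b => if i ∈ F then false else b)

lemma ht_step (w : List Bool) (t : ℕ) (h : t < w.length) :
    ht w (t + 1) = ht w t + (if w.getD t false = true then 1 else -1) := by
  have hg : w[t]? = some w[t] := List.getElem?_eq_getElem h
  have htake := List.take_succ (l := w) (i := t)
  rw [hg] at htake
  have hd : w.getD t false = w[t] := List.getD_eq_getElem w false h
  unfold ht
  rw [htake, hd]
  cases hb : w[t] <;> simp [List.count_append, List.count_singleton', hb] <;>
    push_cast <;> ring

lemma unmatched_min (w : List Bool) (i : ℕ) (hu : UnmatchedN w i) :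
    ∀ t, i < t → t ≤ w.length → ht w (i + 1) ≤ ht w t := by
  classical
  by_contra hcon
  push_neg at hcon
  have hex : ∃ t, i < t ∧ t ≤ w.length ∧ ht w t < ht w (i + 1) := by
    obtain ⟨t, h1, h2, h3⟩ := hcon; exact ⟨t, h1, h2, h3⟩
  obtain ⟨h1, h2, h3⟩ := Nat.find_spec hex
  set t0 := Nat.find hex with ht0
  have hmin : ∀ s, i < s → s ≤ w.length → s < t0 → ht w (i+1) ≤ ht w s := by
    intro s hs1 hs2 hs3
    by_contra hlt
    exact Nat.find_min hex hs3 ⟨hs1, hs2, by linarith⟩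
  -- t0 ≥ i + 2
  have ht2 : i + 2 ≤ t0 := by
    by_contra hc
    have : t0 = i + 1 := by omega
    rw [this] at h3; omega
  have hlen : t0 - 1 < w.length := by omega
  have hprev : ht w (i+1) ≤ ht w (t0 - 1) := hmin _ (by omega) (by omega) (by omega)
  have hstep := ht_step w (t0 - 1) hlen
  rw [show t0 - 1 + 1 = t0 by omega] at hstep
  have hfalse : w.getD (t0-1) false = false := by
    by_contra hb
    simp only [Bool.not_eq_false] at hb
    rw [hb] at hstep; simp at hstep; omega
  rw [hfalse] at hstep
  simp at hstep
  have heq : ht w (t0 - 1) = ht w (i + 1) := by omega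
  -- Matched w i (t0 - 1)
  have hm : Matched w i (t0 - 1) := by
    have hf2 : w.getD (t0-1) true = false := by
      rw [List.getD_eq_getElem w false hlen] at hfalse
      rw [List.getD_eq_getElem w true hlen]; exact hfalse
    refine ⟨by omega, hlen, hu.2.1, hf2, heq, ?_⟩
    · intro t htt
      simp only [Finset.mem_Icc] at htt
      exact hmin t (by omega) (by omega) (by omega)
  exact hu.2.2 _ hlen hm

lemma unmatched_prev (w : List Bool) (i : ℕ) (hu : UnmatchedN w i) (hi : 1 ≤ i)
    (hp : w.getD (i-1) false = true) : UnmatchedN w (i-1) := by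
  have hul := hu.1
  refine ⟨by omega, hp, ?_⟩
  intro j hj hm
  obtain ⟨hm1, hm2, hm3, hm4, hm5, hm6⟩ := hm
  rw [show i - 1 + 1 = i by omega] at hm5 hm6
  have hji : i + 1 ≤ j := by
    by_contra hc
    have hji : j = i := by omega
    subst hji
    have h1 : w.getD j false = true := hu.2.1
    rw [List.getD_eq_getElem w false hj] at h1
    rw [List.getD_eq_getElem w true hj] at hm4
    simp [hm4] at h1
  have hstep := ht_step w i hu.1
  rw [hu.2.1] at hstep; simp at hstep
  have := unmatched_min w i hu j (by omega) (by omega)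
  omega

lemma mem_take_of_le {l : List ℕ} (hs : l.Pairwise (· ≤ ·)) :
    ∀ {k i i' : ℕ}, i ∈ l.take k → i' ∈ l → i' < i → i' ∈ l.take k := by
  induction l with
  | nil => intro k i i' h; simp at h
  | cons x xs ih =>
    intro k i i' hi hi' hlt
    cases k with
    | zero => simp at hi
    | succ k =>
      rw [List.take_succ_cons] at hi ⊢
      rw [List.pairwise_cons] at hs
      rcases List.mem_cons.mp hi' with rfl | hi'x
      · exact List.mem_cons_self
      · rcases List.mem_cons.mp hi with rfl | hix
        · exact absurd (hs.1 i' hi'x) (by omega)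
        · exact List.mem_cons_of_mem _ (ih hs.2 hix hi'x hlt)

-- the F list
def Flist (w : List Bool) : List ℕ :=
  let U := (Finset.range w.length).filter (fun i => UnmatchedN w i)
  (U.sort (· ≤ ·)).take ((U.card + 1) / 2)

lemma mem_Flist_unmatched {w : List Bool} {i : ℕ} (h : i ∈ Flist w) : UnmatchedN w i := by
  unfold Flist at h
  have := List.mem_of_mem_take h
  rw [Finset.mem_sort] at this
  exact (Finset.mem_filter.mp this).2

lemma Flist_down {w : List Bool} {i i' : ℕ} (h : i ∈ Flist w) (hu : UnmatchedN w i')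
    (hlt : i' < i) : i' ∈ Flist w := by
  unfold Flist at h ⊢
  refine mem_take_of_le (Finset.pairwise_sort _ _) h ?_ hlt
  rw [Finset.mem_sort, Finset.mem_filter, Finset.mem_range]
  exact ⟨hu.1, hu⟩

lemma length_xi (w : List Bool) : (xi w).length = w.length := by
  unfold xi; exact List.length_mapIdx

lemma xi_getD (w : List Bool) {i : ℕ} (hi : i < w.length) (d : Bool) :
    (xi w).getD i d = if i ∈ Flist w then false else w.getD i d := by
  have hi' : i < (xi w).length := by rw [length_xi]; exact hi
  rw [List.getD_eq_getElem _ d hi', List.getD_eq_getElem w d hi]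
  unfold xi
  simp only [List.getElem_mapIdx]
  exact List.getElem_mapIdx


/-- ξ preserves the peak set of a Dyck path prefix. -/
theorem peakSet_xi (w : List Bool) (hw : IsPrefixPath w) :
    peakSet (xi w) = peakSet w := by
  ext i
  unfold peakSet
  rw [Finset.mem_filter, Finset.mem_filter, Finset.mem_Ico, Finset.mem_Ico, length_xi]
  constructor
  · rintro ⟨⟨hi1, hi2⟩, hp1, hp2⟩
    have hlen1 : i - 1 < w.length := by omega
    rw [xi_getD w hlen1] at hp1
    rw [xi_getD w hi2] at hp2
    refine ⟨⟨hi1, hi2⟩, ?_, ?_⟩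
    · by_cases h : i - 1 ∈ Flist w
      · simp [h] at hp1
      · simpa [h] using hp1
    · by_cases h : i - 1 ∈ Flist w
      · simp [h] at hp1
      · rw [if_neg h] at hp1
        by_cases h2 : i ∈ Flist w
        · -- i unmatched, w (i-1) = true ⇒ i-1 unmatched ⇒ i-1 ∈ Flist, contra
          exfalso
          have hu := mem_Flist_unmatched h2
          have hu' := unmatched_prev w i hu (by omega) hp1
          exact h (Flist_down h2 hu' (by omega))
        · rw [if_neg h2] at hp2; exact hp2
  · rintro ⟨⟨hi1, hi2⟩, hp1, hp2⟩
    have hlen1 : i - 1 < w.length := by omega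
    refine ⟨⟨hi1, hi2⟩, ?_, ?_⟩
    · rw [xi_getD w hlen1]
      have h : i - 1 ∉ Flist w := by
        intro h
        have hu := mem_Flist_unmatched h
        -- Matched w (i-1) i (immediate match)
        refine hu.2.2 i hi2 ⟨by omega, hi2, hp1, hp2, ?_, ?_⟩
        · rw [show i - 1 + 1 = i by omega]
        · intro t htt
          rw [show i - 1 + 1 = i by omega] at htt ⊢
          simp only [Finset.mem_Icc] at htt
          have : t = i := by omega
          rw [this]
      simpa [h] using hp1
    · rw [xi_getD w hi2]
      have h : i ∉ Flist w := by
        intro h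
        have h1 := (mem_Flist_unmatched h).2.1
        rw [List.getD_eq_getElem w false hi2] at h1
        rw [List.getD_eq_getElem w true hi2] at hp2
        simp [hp2] at h1
      simpa [h] using hp2
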